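/- Let K be a field of characteristic zero and X a rank-two irreducible locally nilpotent K-derivation of K[x,y,z]. Write K[x,y,z]^X = K[u,p] where u is a coordinate of K[x,y,z], let s be a minimal local slice of X with X(s) = c(u), let ℓ be a polynomial in one variable with coefficients in K[u], and set v = s + ℓ(u,p). If u, v is a system of coordinates of K[x,y,z], then there exist w ∈ K[x,y,z] and Q ∈ K[u,v] such that p + Q(u,v) = c(u)·w, the triple u,v,w is a coordinate system of K[x,y,z], and X(u) = 0, X(v) = c(u), X(w) = ∂_v Q(u,v); in particular X is triangulable. -/

import Mathlib

noncomputable section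

variable (K : Type) [Field K] [CharZero K]

abbrev PolyR (K : Type) [Field K] : Type := MvPolynomial (Fin 3) K

/-- A derivation is locally nilpotent if every element is killed by some iterate. -/
def LND (X : Derivation K (PolyR K) (PolyR K)) : Prop :=
  ∀ a : PolyR K, ∃ n : ℕ, 0 < n ∧ (⇑X)^[n] a = 0

/-- `X` is irreducible: every common divisor of `X x, X y, X z` is a unit. -/
def IrredDer (X : Derivation K (PolyR K) (PolyR K)) : Prop :=
  ∀ d : PolyR K, (∀ i : Fin 3, d ∣ X (MvPolynomial.X i)) → IsUnit d

def IsCoord (f : PolyR K) : Prop :=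
  ∃ g h : PolyR K, Algebra.adjoin K {f, g, h} = ⊤

def IsCoordSys (u v w : PolyR K) : Prop := Algebra.adjoin K {u, v, w} = ⊤

def IsSysOfCoords2 (u v : PolyR K) : Prop :=
  ∃ w : PolyR K, Algebra.adjoin K {u, v, w} = ⊤

/-- The corank of a derivation: the largest length of a system of coordinates in the kernel. -/
def corank (X : Derivation K (PolyR K) (PolyR K)) : ℕ :=
  sSup {r : ℕ | ∃ l : List (PolyR K), l.length = r ∧ (∀ f ∈ l, X f = 0) ∧
    ∃ m : List (PolyR K), (l ++ m).length = 3 ∧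
      Algebra.adjoin K {a : PolyR K | a ∈ l ++ m} = ⊤}

def rankD (X : Derivation K (PolyR K) (PolyR K)) : ℕ := 3 - corank K X

def IsLocalSlice (X : Derivation K (PolyR K) (PolyR K)) (s : PolyR K) : Prop :=
  X s ≠ 0 ∧ X (X s) = 0

def IsMinLocalSlice (X : Derivation K (PolyR K) (PolyR K)) (s : PolyR K) : Prop :=
  IsLocalSlice K X s ∧ ∀ v : PolyR K, IsLocalSlice K X v → X v ∣ X s →
    ∃ μ : (PolyR K)ˣ, X v = (μ : PolyR K) * X s

/-- `c` generates the plinth ideal `S^X = {X a : X² a = 0}` as an ideal of the constants. -/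
def IsPlinthGen (X : Derivation K (PolyR K) (PolyR K)) (c : PolyR K) : Prop :=
  {d : PolyR K | ∃ a : PolyR K, X a = d ∧ X (X a) = 0} =
    {d : PolyR K | ∃ r : PolyR K, X r = 0 ∧ d = r * c}

/-- `X` is triangulable: triangular in some coordinate system. -/
def Triangulable (X : Derivation K (PolyR K) (PolyR K)) : Prop :=
  ∃ u v w : PolyR K, IsCoordSys K u v w ∧
    X u ∈ (⊥ : Subalgebra K (PolyR K)) ∧
    X v ∈ Algebra.adjoin K {u} ∧
    X w ∈ Algebra.adjoin K {u, v}

/-- Evaluation of `Q ∈ K[u][T]` at `T = t`, with coefficients evaluated at `u`. -/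
def ev2 (u t : PolyR K) (Q : Polynomial (Polynomial K)) : PolyR K :=
  Polynomial.eval₂ (Polynomial.aeval u).toRingHom t Q

/-- The Jacobian derivation `Jac(f,g,·)` applied to `h`. -/
def jacDet (f g h : PolyR K) : PolyR K :=
  Matrix.det !![MvPolynomial.pderiv 0 f, MvPolynomial.pderiv 1 f, MvPolynomial.pderiv 2 f;
    MvPolynomial.pderiv 0 g, MvPolynomial.pderiv 1 g, MvPolynomial.pderiv 2 g;
    MvPolynomial.pderiv 0 h, MvPolynomial.pderiv 1 h, MvPolynomial.pderiv 2 h]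



-- ======================= auxiliary development =======================

section Aux

open Polynomial
set_option linter.unusedSectionVars false

lemma ringHopfian {R : Type} [CommRing R] [IsNoetherianRing R] (f : R →+* R)
    (hf : Function.Surjective f) : Function.Injective f := by
  have hcoe : ∀ (n : ℕ) (a : R), (f ^ n) a = (⇑f)^[n] a := by
    intro n a; rw [RingHom.coe_pow]
  have hmono : Monotone (fun n => RingHom.ker (f ^ n) : ℕ → Ideal R) := by
    apply monotone_nat_of_le_succ
    intro n a ha
    rw [RingHom.mem_ker] at ha ⊢
    rw [hcoe] at ha ⊢
    rw [Function.iterate_succ_apply', ha, map_zero]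
  obtain ⟨N, hN⟩ := monotone_stabilizes_iff_noetherian.mpr
    (isNoetherianRing_iff.mp ‹_›) ⟨fun n => RingHom.ker (f ^ n), hmono⟩
  intro a b hab
  have h0 : f (a - b) = 0 := by rw [map_sub, hab, sub_self]
  have hsurj : Function.Surjective (⇑f)^[N] := Function.Surjective.iterate hf N
  obtain ⟨x, hx⟩ := hsurj (a - b)
  have hm : x ∈ RingHom.ker (f ^ (N + 1)) := by
    rw [RingHom.mem_ker, hcoe, Function.iterate_succ_apply', hx, h0]
  have heq : RingHom.ker (f ^ N) = RingHom.ker (f ^ (N+1)) := hN (N + 1) (by omega)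
  rw [← heq] at hm
  rw [RingHom.mem_ker, hcoe, hx] at hm
  exact sub_eq_zero.mp hm

variable (K : Type) [Field K] [CharZero K]

abbrev TT (K : Type) [Field K] : Type := Polynomial (Polynomial (Polynomial K))

def iotaB : PolyR K ≃ₐ[K] TT K :=
  (MvPolynomial.finSuccEquiv K 2).trans <| Polynomial.mapAlgEquiv <|
    (MvPolynomial.finSuccEquiv K 1).trans <| Polynomial.mapAlgEquiv <|
      (MvPolynomial.finSuccEquiv K 0).trans <| Polynomial.mapAlgEquiv <|
        MvPolynomial.isEmptyAlgEquiv K (Fin 0)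

def E2 (u v : PolyR K) : Polynomial (Polynomial K) →ₐ[K] PolyR K :=
  Polynomial.eval₂AlgHom (Polynomial.aeval u) v (fun _ => Commute.all _ _)

def Psi (u v t : PolyR K) : TT K →ₐ[K] PolyR K :=
  Polynomial.eval₂AlgHom (E2 K u v) t (fun _ => Commute.all _ _)

lemma Psi_X (u v t : PolyR K) : Psi K u v t Polynomial.X = t := by
  simp [Psi]

lemma Psi_C (u v t : PolyR K) (s : Polynomial (Polynomial K)) :
    Psi K u v t (C s) = ev2 K u v s := by
  simp [Psi, E2, ev2]

lemma Psi_CC (u v t : PolyR K) (r : Polynomial K) :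
    Psi K u v t (C (C r)) = Polynomial.aeval u r := by
  rw [Psi_C]; simp [ev2]

lemma Psi_surj (u v t : PolyR K) (h : Algebra.adjoin K {u, v, t} = ⊤) :
    Function.Surjective (Psi K u v t) := by
  rw [← AlgHom.range_eq_top]
  rw [eq_top_iff, ← h]
  apply Algebra.adjoin_le
  intro a ha
  rcases ha with h1 | h2 | h3
  · exact ⟨C (C Polynomial.X), by show Psi K u v t _ = a; rw [Psi_CC]; simp [h1]⟩
  · exact ⟨C Polynomial.X, by show Psi K u v t _ = a; rw [Psi_C]; simp [ev2, h2]⟩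
  · exact ⟨Polynomial.X, by show Psi K u v t _ = a; rw [Psi_X]; exact h3.symm⟩

lemma Psi_inj (u v t : PolyR K) (h : Algebra.adjoin K {u, v, t} = ⊤) :
    Function.Injective (Psi K u v t) := by
  have hsurj := Psi_surj K u v t h
  set e : PolyR K →ₐ[K] PolyR K := (Psi K u v t).comp (iotaB K).toAlgHom with he
  have hesurj : Function.Surjective e := by
    intro b; obtain ⟨q, hq⟩ := hsurj b
    exact ⟨(iotaB K).symm q, by simp [he, hq]⟩
  have heinj : Function.Injective e := ringHopfian e.toRingHom hesurj
  intro a b hab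
  have h1 : e ((iotaB K).symm a) = e ((iotaB K).symm b) := by simp [he, hab]
  have h2 := heinj h1
  exact (iotaB K).symm.injective h2

def psiE (u v t : PolyR K) (h : Algebra.adjoin K {u, v, t} = ⊤) : TT K ≃ₐ[K] PolyR K :=
  AlgEquiv.ofBijective (Psi K u v t) ⟨Psi_inj K u v t h, Psi_surj K u v t h⟩

lemma psiE_apply (u v t : PolyR K) (h : Algebra.adjoin K {u, v, t} = ⊤) (q : TT K) :
    psiE K u v t h q = Psi K u v t q := rfl

/-- Conjugate a derivation by an algebra isomorphism. -/
def conjDer {B : Type} [CommRing B] [Algebra K B] (ψ : TT K ≃ₐ[K] B)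
    (X : Derivation K B B) : Derivation K (TT K) (TT K) where
  toLinearMap := ψ.symm.toLinearMap.comp (X.toLinearMap.comp ψ.toLinearMap)
  map_one_eq_zero' := by simp
  leibniz' := fun a b => by
    simp only [LinearMap.comp_apply, AlgEquiv.toLinearMap_apply, Derivation.coeFn_coe]
    rw [map_mul, Derivation.leibniz, smul_eq_mul, smul_eq_mul, map_add, map_mul, map_mul,
      AlgEquiv.symm_apply_apply, AlgEquiv.symm_apply_apply, smul_eq_mul, smul_eq_mul]

lemma conjDer_apply {B : Type} [CommRing B] [Algebra K B] (ψ : TT K ≃ₐ[K] B)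
    (X : Derivation K B B) (g : TT K) : conjDer K ψ X g = ψ.symm (X (ψ g)) := rfl

lemma conjDer_iterate {B : Type} [CommRing B] [Algebra K B] (ψ : TT K ≃ₐ[K] B)
    (X : Derivation K B B) (n : ℕ) (g : TT K) :
    (⇑(conjDer K ψ X))^[n] g = ψ.symm ((⇑X)^[n] (ψ g)) := by
  induction n generalizing g with
  | zero => simp
  | succ n ih =>
    rw [Function.iterate_succ_apply, Function.iterate_succ_apply, conjDer_apply, ih,
      AlgEquiv.apply_symm_apply]

/-- y-derivative of coefficients. -/
def Dy (g : TT K) : TT K := g.sum fun i s => C (derivative s) * Polynomial.X ^ i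

lemma Dy_coeff (g : TT K) (n : ℕ) : (Dy K g).coeff n = derivative (g.coeff n) := by
  rw [Dy, Polynomial.sum, finset_sum_coeff]
  simp only [coeff_C_mul, coeff_X_pow, mul_ite, mul_one, mul_zero]
  rw [Finset.sum_ite_eq g.support n (fun i => derivative (g.coeff i))]
  split_ifs with h
  · rfl
  · rw [Polynomial.notMem_support_iff.mp h, map_zero]

lemma Dy_add (g h : TT K) : Dy K (g + h) = Dy K g + Dy K h := by
  ext n; simp [Dy_coeff]

lemma Dy_monomial (n : ℕ) (s : Polynomial (Polynomial K)) :
    Dy K (monomial n s) = C (derivative s) * Polynomial.X ^ n := by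
  ext m
  rw [Dy_coeff]
  simp only [coeff_monomial, coeff_C_mul, coeff_X_pow, mul_ite, mul_one, mul_zero]
  split_ifs with h h' <;> simp_all

lemma natDegree_Dy_le (g : TT K) : (Dy K g).natDegree ≤ g.natDegree := by
  apply natDegree_le_iff_coeff_eq_zero.mpr
  intro m hm
  rw [Dy_coeff, coeff_eq_zero_of_natDegree_lt hm, map_zero]

section master

variable (D : Derivation K (TT K) (TT K)) (c : Polynomial K)
variable (hx : D (C (C Polynomial.X)) = 0) (hy : D (C Polynomial.X) = C (C c))

include hx in
lemma D_CC (r : Polynomial K) : D (C (C r)) = 0 := by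
  induction r using Polynomial.induction_on' with
  | add p q hp hq => rw [map_add, map_add, map_add, hp, hq, add_zero]
  | monomial n a =>
    have harg : (C (C (Polynomial.monomial n a)) : TT K)
        = C (C (Polynomial.C a)) * C (C Polynomial.X) ^ n := by
      rw [← Polynomial.C_mul_X_pow_eq_monomial]; simp [map_mul, map_pow]
    rw [harg, Derivation.leibniz, Derivation.leibniz_pow, hx]
    have h2 : D (C (C (Polynomial.C a))) = 0 := by
      have h3 : (C (C (Polynomial.C a)) : TT K) = algebraMap K (TT K) a := rfl
      rw [h3, Derivation.map_algebraMap]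
    rw [h2]
    simp

include hx hy in
lemma D_C (s : Polynomial (Polynomial K)) :
    D (C s) = C (C c * derivative s) := by
  induction s using Polynomial.induction_on' with
  | add p q hp hq => rw [map_add, map_add, hp, hq, ← C_add, ← mul_add, ← map_add]
  | monomial n r =>
    have harg : (C (Polynomial.monomial n r) : TT K)
        = C (Polynomial.C r) * C Polynomial.X ^ n := by
      rw [← Polynomial.C_mul_X_pow_eq_monomial]; simp [map_mul, map_pow]
    rw [harg, Derivation.leibniz, Derivation.leibniz_pow, hy, D_CC K D hx]
    rw [Polynomial.derivative_monomial]
    simp only [smul_eq_mul, mul_zero, add_zero, smul_mul_assoc, nsmul_eq_mul]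
    rw [← Polynomial.C_mul_X_pow_eq_monomial]
    simp only [map_mul, map_pow, map_natCast]
    ring

include hx hy

lemma D_master (g : TT K) :
    D g = derivative g * D Polynomial.X + C (C c) * Dy K g := by
  induction g using Polynomial.induction_on' with
  | add p q hp hq => rw [map_add, hp, hq, derivative_add, Dy_add]; ring
  | monomial n s =>
    have h1 : (monomial n s : TT K) = C s * Polynomial.X ^ n :=
      (Polynomial.C_mul_X_pow_eq_monomial).symm
    rw [Dy_monomial, Polynomial.derivative_monomial, h1, Derivation.leibniz,
      Derivation.leibniz_pow, D_C K D c hx hy, ← Polynomial.C_mul_X_pow_eq_monomial]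
    simp only [smul_eq_mul, map_mul, map_natCast, nsmul_eq_mul]
    ring

lemma D_deg_le (he : 1 ≤ (D Polynomial.X).natDegree) (g : TT K) :
    (D g).natDegree ≤ g.natDegree + ((D Polynomial.X).natDegree - 1) := by
  rw [D_master K D c hx hy]
  apply le_trans (natDegree_add_le _ _)
  apply max_le
  · by_cases hd : g.natDegree = 0
    · obtain ⟨a, ha⟩ := natDegree_eq_zero.mp hd
      rw [← ha, derivative_C, zero_mul, natDegree_zero]
      exact Nat.zero_le _
    · apply le_trans (natDegree_mul_le)
      have h1 : (derivative g).natDegree ≤ g.natDegree - 1 := natDegree_derivative_le g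
      omega
  · apply le_trans (natDegree_mul_le)
    have h2 := natDegree_Dy_le K g
    simp only [natDegree_C]
    omega

lemma D_step (he : 1 ≤ (D Polynomial.X).natDegree) (g : TT K) (hg0 : g ≠ 0)
    (hgd : 1 ≤ g.natDegree) :
    D g ≠ 0 ∧ (D g).natDegree = g.natDegree + ((D Polynomial.X).natDegree - 1) := by
  set F := D Polynomial.X with hF
  set e := F.natDegree with hee
  set d := g.natDegree with hd
  set L := g.leadingCoeff with hL
  have hL0 : L ≠ 0 := leadingCoeff_ne_zero.mpr hg0
  have hF0 : F ≠ 0 := by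
    intro h; rw [h] at hee; simp at hee; omega
  have hlcF : F.leadingCoeff ≠ 0 := leadingCoeff_ne_zero.mpr hF0
  set N := d + (e - 1) with hN
  clear_value F e d L N
  -- derivative of g
  have hdgc : (derivative g).coeff (d - 1) = L * (d : Polynomial (Polynomial K)) := by
    rw [coeff_derivative]
    have h1 : d - 1 + 1 = d := by omega
    have h2 : ((d - 1 : ℕ) : Polynomial (Polynomial K)) + 1 = (d : Polynomial (Polynomial K)) := by
      rw [← Nat.cast_succ, Nat.succ_eq_add_one, h1]
    rw [h1, h2, hL, leadingCoeff, ← hd]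
  have hdne : ((d : Polynomial (Polynomial K))) ≠ 0 :=
    Nat.cast_ne_zero.mpr (by omega)
  have hdg0 : (derivative g).coeff (d-1) ≠ 0 := by
    rw [hdgc]; exact mul_ne_zero hL0 hdne
  have hdgdeg : (derivative g).natDegree = d - 1 := by
    apply le_antisymm
    · rw [hd]; exact natDegree_derivative_le g
    · exact le_natDegree_of_ne_zero hdg0
  have hdgne : derivative g ≠ 0 := fun h => hdg0 (by rw [h]; simp)
  -- coefficient of term 1 at N
  have hFdeg : F.natDegree = e := hee.symm
  have ht1 : (derivative g * F).coeff N = L * (d : Polynomial (Polynomial K)) * F.leadingCoeff := by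
    have hNe : N = (derivative g).natDegree + F.natDegree := by rw [hdgdeg, hFdeg]; omega
    rw [hNe, coeff_mul_degree_add_degree]
    rw [leadingCoeff, hdgdeg, hdgc]
  -- coefficient of term 2 at N
  have ht2 : (C (C c) * Dy K g).coeff N = C c * derivative (g.coeff N) := by
    rw [coeff_C_mul, Dy_coeff]
  have hdd : g.natDegree = d := hd.symm
  have hcoeff : (D g).coeff N =
      L * (d : Polynomial (Polynomial K)) * F.leadingCoeff + C c * derivative (g.coeff N) := by
    rw [D_master K D c hx hy, ← hF, coeff_add, ht1, ht2]
  have hτ : (D g).coeff N ≠ 0 := by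
    rw [hcoeff]
    by_cases he2 : 2 ≤ e
    · have h5 : g.coeff N = 0 := coeff_eq_zero_of_natDegree_lt (by omega)
      rw [h5, map_zero, mul_zero, add_zero]
      exact mul_ne_zero (mul_ne_zero hL0 hdne) hlcF
    · have he1 : e = 1 := by omega
      have hNd : N = d := by omega
      rw [hNd]
      have hcL : g.coeff d = L := by rw [hL, leadingCoeff, ← hd]
      rw [hcL]
      set dL := derivative L with hdL
      by_cases hdL0 : dL = 0
      · rw [hdL0, mul_zero, add_zero]
        exact mul_ne_zero (mul_ne_zero hL0 hdne) hlcF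
      · -- degrees differ
        by_cases hc0 : (C c : Polynomial (Polynomial K)) = 0
        · rw [hc0, zero_mul, add_zero]
          exact mul_ne_zero (mul_ne_zero hL0 hdne) hlcF
        · have h1 : (L * (d : Polynomial (Polynomial K)) * F.leadingCoeff) ≠ 0 :=
            mul_ne_zero (mul_ne_zero hL0 hdne) hlcF
          have hdeg1 : (L * (d : Polynomial (Polynomial K)) * F.leadingCoeff).natDegree
              = L.natDegree + F.leadingCoeff.natDegree := by
            rw [natDegree_mul (mul_ne_zero hL0 hdne) hlcF, natDegree_mul hL0 hdne]
            simp [natDegree_natCast]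
          have hLd : L.natDegree ≠ 0 := by
            intro h0
            obtain ⟨a, ha⟩ := natDegree_eq_zero.mp h0
            exact hdL0 (by rw [hdL, ← ha, derivative_C])
          have hdeg2 : (C c * dL).natDegree < (L * (d : Polynomial (Polynomial K)) * F.leadingCoeff).natDegree := by
            rw [hdeg1]
            apply lt_of_le_of_lt (natDegree_mul_le)
            have hlt : dL.natDegree < L.natDegree := by
              rw [hdL]; exact natDegree_derivative_lt hLd
            simp only [natDegree_C]
            omega
          intro habs
          have h6 := congrArg (fun q => q.coeff ((L * (d : Polynomial (Polynomial K)) * F.leadingCoeff).natDegree)) habs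
          simp only [coeff_add, coeff_zero] at h6
          rw [coeff_natDegree, coeff_eq_zero_of_natDegree_lt hdeg2, add_zero] at h6
          exact h1 (leadingCoeff_eq_zero.mp h6)
  constructor
  · intro h; rw [h] at hτ; simp at hτ
  · have he' : 1 ≤ (D Polynomial.X).natDegree := by rw [← hF, ← hee]; exact he
    have hle := D_deg_le K D c hx hy he' g
    rw [← hF, ← hee, ← hd] at hle
    rw [← hN] at hle
    exact le_antisymm hle (le_natDegree_of_ne_zero hτ)

lemma D_z_free (hln : ∀ g : TT K, ∃ n : ℕ, 0 < n ∧ (⇑D)^[n] g = 0) :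
    ∃ Fr : Polynomial (Polynomial K), D Polynomial.X = C Fr := by
  by_contra hcon
  push_neg at hcon
  have he : 1 ≤ (D Polynomial.X).natDegree := by
    rcases Nat.eq_zero_or_pos (D Polynomial.X).natDegree with h0 | h1
    · obtain ⟨a, ha⟩ := natDegree_eq_zero.mp h0
      exact absurd ha.symm (hcon a)
    · exact h1
  have hF0 : D Polynomial.X ≠ 0 := by
    intro h
    exact hcon 0 (by rw [h, map_zero])
  have claim : ∀ k : ℕ, (⇑D)^[k+1] Polynomial.X ≠ 0 ∧ 1 ≤ ((⇑D)^[k+1] Polynomial.X).natDegree := by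
    intro k
    induction k with
    | zero => simpa using ⟨hF0, he⟩
    | succ k ih =>
      have step := D_step K D c hx hy he _ ih.1 ih.2
      rw [Function.iterate_succ_apply']
      exact ⟨step.1, by omega⟩
  obtain ⟨n, hn0, hz⟩ := hln Polynomial.X
  obtain ⟨k, rfl⟩ : ∃ k, n = k + 1 := ⟨n - 1, by omega⟩
  exact (claim k).1 hz

end master

lemma exists_antider (f : Polynomial (Polynomial K)) :
    ∃ g : Polynomial (Polynomial K), derivative g = f := by
  refine ⟨f.sum fun i a => ((i + 1 : K)⁻¹) • (C a * Polynomial.X ^ (i + 1)), ?_⟩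
  rw [Polynomial.sum, map_sum]
  conv_rhs => rw [← Polynomial.sum_C_mul_X_pow_eq f]
  rw [Polynomial.sum]
  apply Finset.sum_congr rfl
  intro i _
  rw [derivative_smul, derivative_C_mul_X_pow]
  simp only [Nat.add_sub_cancel]
  have hne : ((i : K) + 1) ≠ 0 := by
    have h0 : ((i : K) + 1) = ((i + 1 : ℕ) : K) := by push_cast; ring
    rw [h0]
    exact Nat.cast_ne_zero.mpr (Nat.succ_ne_zero i)
  have hcast : (C (f.coeff i * ((i + 1 : ℕ) : Polynomial K)) : Polynomial (Polynomial K))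
      = ((i : K) + 1) • (C (f.coeff i)) := by
    rw [Algebra.smul_def]
    simp only [map_mul, map_natCast, Polynomial.algebraMap_apply, map_add, map_one]
    push_cast
    ring
  rw [hcast, smul_mul_assoc, smul_smul, inv_mul_cancel₀ hne, one_smul]

def Theta (P : TT K) : Polynomial (Polynomial K) →ₐ[K] TT K where
  toRingHom := (eval₂RingHom (C : Polynomial (Polynomial K) →+* TT K) P).comp
    (mapRingHom (C : Polynomial K →+* Polynomial (Polynomial K)))
  commutes' := fun k => by
    simp [Polynomial.algebraMap_apply]

lemma Theta_apply (P : TT K) (q : Polynomial (Polynomial K)) :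
    Theta K P q = (q.map (C : Polynomial K →+* Polynomial (Polynomial K))).comp P := rfl

lemma Theta_natDegree (P : TT K) (q : Polynomial (Polynomial K)) :
    (Theta K P q).natDegree = q.natDegree * P.natDegree := by
  rw [Theta_apply, natDegree_comp, natDegree_map_eq_of_injective]
  exact Polynomial.C_injective

lemma adjoin_le_Theta_range (P : TT K) :
    Algebra.adjoin K {(C (C Polynomial.X) : TT K), P} ≤ (Theta K P).range := by
  apply Algebra.adjoin_le
  intro a ha
  rcases ha with h1 | h2
  · exact ⟨C Polynomial.X, by show Theta K P _ = a; rw [Theta_apply]; simp [h1]⟩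
  · refine ⟨Polynomial.X, ?_⟩
    show Theta K P _ = a
    rw [Theta_apply]
    simp [Set.mem_singleton_iff.mp h2]

-- B-side lemmas about ev2 and derivations

lemma ev2_monomial (u t : PolyR K) (n : ℕ) (s : Polynomial K) :
    ev2 K u t (monomial n s) = Polynomial.aeval u s * t ^ n := by
  rw [ev2, eval₂_monomial]; rfl

lemma ev2_add (u t : PolyR K) (Q R : Polynomial (Polynomial K)) :
    ev2 K u t (Q + R) = ev2 K u t Q + ev2 K u t R := by
  rw [ev2, ev2, ev2, eval₂_add]

lemma ev2_neg (u t : PolyR K) (Q : Polynomial (Polynomial K)) :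
    ev2 K u t (-Q) = -ev2 K u t Q := by
  rw [ev2, ev2, eval₂_neg]

lemma ev2_C (u t : PolyR K) (r : Polynomial K) :
    ev2 K u t (C r) = Polynomial.aeval u r := by
  rw [ev2, eval₂_C]; rfl

lemma ev2_X (u t : PolyR K) : ev2 K u t Polynomial.X = t := by
  rw [ev2, eval₂_X]

lemma X_aeval (X : Derivation K (PolyR K) (PolyR K)) (u : PolyR K) (hu : X u = 0)
    (r : Polynomial K) : X (Polynomial.aeval u r) = 0 := by
  induction r using Polynomial.induction_on' with
  | add p q hp hq => rw [map_add, map_add, hp, hq, add_zero]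
  | monomial n a =>
    rw [Polynomial.aeval_monomial, Derivation.leibniz, Derivation.leibniz_pow, hu]
    simp

lemma X_ev2 (X : Derivation K (PolyR K) (PolyR K)) (u t : PolyR K) (hu : X u = 0)
    (Q : Polynomial (Polynomial K)) :
    X (ev2 K u t Q) = ev2 K u t (derivative Q) * X t := by
  induction Q using Polynomial.induction_on' with
  | add p q hp hq => rw [ev2_add, map_add, hp, hq, derivative_add, ev2_add]; ring
  | monomial n s =>
    rw [ev2_monomial, derivative_monomial, ev2_monomial, Derivation.leibniz,
      Derivation.leibniz_pow, X_aeval K X u hu]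
    simp only [smul_eq_mul, mul_zero, add_zero, map_mul, map_natCast, smul_mul_assoc,
      nsmul_eq_mul]
    ring

lemma ev2_mem (u t : PolyR K) (Q : Polynomial (Polynomial K)) :
    ev2 K u t Q ∈ Algebra.adjoin K {u, t} := by
  induction Q using Polynomial.induction_on' with
  | add p q hp hq => rw [ev2_add]; exact Subalgebra.add_mem _ hp hq
  | monomial n s =>
    rw [ev2_monomial]
    apply Subalgebra.mul_mem
    · have h1 : Polynomial.aeval u s ∈ Algebra.adjoin K {u} := by
        rw [Algebra.adjoin_singleton_eq_range_aeval]
        exact ⟨s, rfl⟩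
      exact Algebra.adjoin_mono (by simp) h1
    · exact Subalgebra.pow_mem _ (Algebra.subset_adjoin (by simp)) n

lemma nat_mul_eq_one' {m n : ℕ} (h : m * n = 1) : m = 1 ∧ n = 1 :=
  ⟨Nat.dvd_one.mp ⟨n, h.symm⟩, Nat.dvd_one.mp ⟨m, by rw [mul_comm]; exact h.symm⟩⟩

end Aux

open Polynomial

/-- If `v = s + ℓ(u,p)` extends (with `u`) to a coordinate system, then there are `w`
and `Q` with `p + Q(u,v) = c(u)·w`, `u,v,w` a coordinate system, `X u = 0`,
`X v = c(u)`, `X w = ∂_v Q(u,v)`; in particular `X` is triangulable. -/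
theorem coordinate_pair_gives_triangular_form {K : Type} [Field K] [CharZero K]
    (X : Derivation K (PolyR K) (PolyR K))
    (hln : LND K X) (hirr : IrredDer K X) (hrk : rankD K X = 2)
    (u p : PolyR K) (hu : IsCoord K u)
    (hker : {a : PolyR K | X a = 0} = (Algebra.adjoin K {u, p} : Subalgebra K (PolyR K)))
    (s : PolyR K) (hs : IsMinLocalSlice K X s)
    (c : Polynomial K) (hc : X s = Polynomial.aeval u c)
    (ℓ : Polynomial (Polynomial K))
    (hsys : IsSysOfCoords2 K u (s + ev2 K u p ℓ)) :
    ∃ (w : PolyR K) (Q : Polynomial (Polynomial K)),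
      p + ev2 K u (s + ev2 K u p ℓ) Q = Polynomial.aeval u c * w ∧
      IsCoordSys K u (s + ev2 K u p ℓ) w ∧
      X u = 0 ∧ X (s + ev2 K u p ℓ) = Polynomial.aeval u c ∧
      X w = ev2 K u (s + ev2 K u p ℓ) (Polynomial.derivative Q) ∧
      Triangulable K X := by
  classical
  set v := s + ev2 K u p ℓ with hv
  obtain ⟨t, hadj⟩ := hsys
  have hmemker : ∀ a : PolyR K, a ∈ (Algebra.adjoin K {u, p} : Subalgebra K (PolyR K)) → X a = 0 := by
    intro a ha
    have h1 : a ∈ {a : PolyR K | X a = 0} := by rw [hker]; exact ha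
    exact h1
  have hXu : X u = 0 := hmemker u (Algebra.subset_adjoin (by simp))
  have hXp : X p = 0 := hmemker p (Algebra.subset_adjoin (by simp))
  have hc0 : c ≠ 0 := by
    intro h; exact hs.1.1 (by rw [hc, h, map_zero])
  have hauc : Polynomial.aeval u c ≠ 0 := by rw [← hc]; exact hs.1.1
  have hXv : X v = Polynomial.aeval u c := by
    rw [hv, map_add, hmemker (ev2 K u p ℓ) (ev2_mem K u p ℓ), add_zero, hc]
  set ψ := psiE K u v t hadj with hψdef
  have hψz : ψ Polynomial.X = t := Psi_X K u v t
  have hψC : ∀ sQ : Polynomial (Polynomial K), ψ (C sQ) = ev2 K u v sQ :=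
    fun sQ => Psi_C K u v t sQ
  have hψCC : ∀ r : Polynomial K, ψ (C (C r)) = Polynomial.aeval u r :=
    fun r => Psi_CC K u v t r
  set Yt := conjDer K ψ X with hYtdef
  have hYtapp : ∀ g : TT K, Yt g = ψ.symm (X (ψ g)) := fun g => rfl
  have hx : Yt (C (C Polynomial.X)) = 0 := by
    rw [hYtapp]
    have h1 : ψ (C (C Polynomial.X)) = u := by rw [hψCC]; simp
    rw [h1, hXu, map_zero]
  have hy : Yt (C Polynomial.X) = C (C c) := by
    rw [hYtapp]
    have h1 : ψ (C Polynomial.X) = v := by rw [hψC]; exact ev2_X K u v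
    rw [h1, hXv, AlgEquiv.symm_apply_eq, hψCC]
  have hlnT : ∀ g : TT K, ∃ n : ℕ, 0 < n ∧ (⇑Yt)^[n] g = 0 := by
    intro g
    obtain ⟨n, hn, h0⟩ := hln (ψ g)
    refine ⟨n, hn, ?_⟩
    rw [hYtdef, conjDer_iterate K ψ X n g, h0, map_zero]
  obtain ⟨Fr, hFr⟩ := D_z_free K Yt c hx hy hlnT
  obtain ⟨Γ, hΓ⟩ := exists_antider K Fr
  set κ : TT K := C (C c) * Polynomial.X + C (-Γ) with hκ
  have hYκ : Yt κ = 0 := by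
    rw [hκ, map_add, Derivation.leibniz, hFr, D_CC K Yt hx c, D_C K Yt c hx hy (-Γ)]
    have hdneg : Polynomial.derivative (-Γ) = -Fr := by rw [map_neg, hΓ]
    rw [hdneg]
    simp only [smul_eq_mul, mul_zero, add_zero, mul_neg, map_neg, map_mul]
    ring
  set PT := ψ.symm p with hPTdef
  have hψPT : ψ PT = p := by rw [hPTdef, AlgEquiv.apply_symm_apply]
  have hκmem : κ ∈ Algebra.adjoin K {(C (C Polynomial.X) : TT K), PT} := by
    have h1 : X (ψ κ) = 0 := by
      have h2 := hYκ
      rw [hYtapp] at h2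
      have h3 := congrArg ψ h2
      rw [AlgEquiv.apply_symm_apply, map_zero] at h3
      exact h3
    have h3 : ψ κ ∈ (Algebra.adjoin K {u, p} : Subalgebra K (PolyR K)) := by
      have h4 : ψ κ ∈ {a : PolyR K | X a = 0} := h1
      rwa [hker] at h4
    have h4 : (⇑ψ.toAlgHom) '' {(C (C Polynomial.X) : TT K), PT} = {u, p} := by
      rw [Set.image_insert_eq, Set.image_singleton]
      have e1 : ψ.toAlgHom (C (C Polynomial.X)) = u := by
        show ψ (C (C Polynomial.X)) = u
        rw [hψCC]; simp
      have e2 : ψ.toAlgHom PT = p := hψPT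
      rw [e1, e2]
    have h5 : Subalgebra.map ψ.toAlgHom
        (Algebra.adjoin K {(C (C Polynomial.X) : TT K), PT}) = Algebra.adjoin K {u, p} := by
      rw [AlgHom.map_adjoin, h4]
    have h6 : ψ κ ∈ Subalgebra.map ψ.toAlgHom
        (Algebra.adjoin K {(C (C Polynomial.X) : TT K), PT}) := by
      rw [h5]; exact h3
    obtain ⟨y, hy1, hy2⟩ := h6
    have h7 : y = κ := ψ.injective hy2
    rwa [← h7]
  obtain ⟨W, hW0⟩ := adjoin_le_Theta_range K PT hκmem
  have hW' : Theta K PT W = κ := hW0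
  have hCcT : (C (C c) : TT K) ≠ 0 :=
    Polynomial.C_ne_zero.mpr (Polynomial.C_ne_zero.mpr hc0)
  have hκdeg : κ.natDegree = 1 := by
    rw [hκ]
    exact Polynomial.natDegree_linear (Polynomial.C_ne_zero.mpr hc0)
  have hmul1 : W.natDegree * PT.natDegree = 1 := by
    rw [← Theta_natDegree K PT W, hW', hκdeg]
  obtain ⟨hWdeg, hPTdeg⟩ := nat_mul_eq_one' hmul1
  set A1 := PT.coeff 1 with hA1def
  set A0 := PT.coeff 0 with hA0def
  have hPTdec : PT = C A1 * Polynomial.X + C A0 :=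
    Polynomial.eq_X_add_C_of_natDegree_le_one (by omega)
  set r1 := W.coeff 1 with hr1def
  have hWdec : W = C r1 * Polynomial.X + C (W.coeff 0) :=
    Polynomial.eq_X_add_C_of_natDegree_le_one (by omega)
  have hWne : W ≠ 0 := by intro h; rw [h] at hWdeg; simp at hWdeg
  have hr1ne : r1 ≠ 0 := by
    have h1 := Polynomial.leadingCoeff_ne_zero.mpr hWne
    rwa [Polynomial.leadingCoeff, hWdeg] at h1
  have hkey : (C c : Polynomial (Polynomial K)) = C r1 * A1 := by
    have hTheta : Theta K PT W = C (C r1) * PT + C (C (W.coeff 0)) := by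
      conv_lhs => rw [hWdec]
      rw [Theta_apply]
      simp only [Polynomial.map_add, Polynomial.map_mul, Polynomial.map_C, Polynomial.map_X,
        add_comp, mul_comp, C_comp, X_comp]
    have h1 : (C (C r1) * PT + C (C (W.coeff 0))).coeff 1 = κ.coeff 1 := by rw [← hTheta, hW']
    rw [hκ] at h1
    simp only [coeff_add, coeff_C_mul, coeff_X_one, mul_one] at h1
    rw [coeff_C, coeff_C] at h1
    simp only [one_ne_zero, if_false, add_zero] at h1
    rw [← hA1def] at h1
    exact h1.symm
  have hCcne : (C c : Polynomial (Polynomial K)) ≠ 0 := Polynomial.C_ne_zero.mpr hc0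
  have hCr1ne : (C r1 : Polynomial (Polynomial K)) ≠ 0 := Polynomial.C_ne_zero.mpr hr1ne
  have hA1ne : A1 ≠ 0 := by
    intro h; rw [h, mul_zero] at hkey; exact hCcne hkey
  have hA1deg : A1.natDegree = 0 := by
    have h1 := congrArg Polynomial.natDegree hkey
    rw [Polynomial.natDegree_C, Polynomial.natDegree_mul hCr1ne hA1ne,
      Polynomial.natDegree_C] at h1
    omega
  obtain ⟨A1x, hA1x⟩ := Polynomial.natDegree_eq_zero.mp hA1deg
  have hcfact : c = r1 * A1x := by
    apply Polynomial.C_injective (R := Polynomial K)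
    rw [hkey, ← hA1x, map_mul]
  have hA1xne : A1x ≠ 0 := by
    intro h; rw [h] at hA1x; simp at hA1x; exact hA1ne hA1x.symm
  have hYPT : Yt PT = 0 := by
    rw [hYtapp, hψPT, hXp, map_zero]
  have heq0 : A1 * Fr + C c * Polynomial.derivative A0 = 0 := by
    have h1 : Yt PT = C (A1 * Fr + C c * Polynomial.derivative A0) := by
      conv_lhs => rw [hPTdec]
      rw [map_add, Derivation.leibniz, hFr, D_C K Yt c hx hy A0, D_C K Yt c hx hy A1]
      have hdA1 : Polynomial.derivative A1 = 0 := by rw [← hA1x, Polynomial.derivative_C]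
      rw [hdA1, mul_zero, map_zero, smul_eq_mul, smul_eq_mul, mul_zero, add_zero, map_add,
        ← map_mul]
    rw [hYPT] at h1
    exact Polynomial.C_injective
      (show C (A1 * Fr + C c * Polynomial.derivative A0) = C 0 by rw [map_zero, ← h1])
  have hFr2 : Fr = -(C r1 * Polynomial.derivative A0) := by
    have hCA1xne : (C A1x : Polynomial (Polynomial K)) ≠ 0 := Polynomial.C_ne_zero.mpr hA1xne
    apply mul_left_cancel₀ hCA1xne
    have h2 : A1 * Fr = -(C c * Polynomial.derivative A0) := eq_neg_of_add_eq_zero_left heq0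
    rw [← hA1x, hcfact, map_mul] at h2
    rw [h2]; ring
  have hdvd : ∀ g : TT K, (C (C r1) : TT K) ∣ Yt g := by
    intro g
    rw [D_master K Yt c hx hy g, hFr]
    apply dvd_add
    · refine ⟨derivative g * C (-(Polynomial.derivative A0)), ?_⟩
      rw [hFr2]
      simp only [map_neg, map_mul]
      ring
    · refine ⟨C (C A1x) * Dy K g, ?_⟩
      have h8 : (C (C c) : TT K) = C (C r1) * C (C A1x) := by
        rw [hcfact]; simp only [map_mul]
      rw [h8]; ring
  have hunit : IsUnit (C (C r1) : TT K) := by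
    have h1 : ∀ i : Fin 3, ψ (C (C r1)) ∣ X (MvPolynomial.X i) := by
      intro i
      have h2 : X (MvPolynomial.X i) = ψ (Yt (ψ.symm (MvPolynomial.X i))) := by
        rw [hYtapp, AlgEquiv.apply_symm_apply, AlgEquiv.apply_symm_apply]
      rw [h2]
      obtain ⟨g, hg⟩ := hdvd (ψ.symm (MvPolynomial.X i))
      exact ⟨ψ g, by rw [hg, map_mul]⟩
    have h3 := hirr _ h1
    have h4 := h3.map ψ.symm.toAlgHom
    rwa [show ψ.symm.toAlgHom (ψ (C (C r1))) = (C (C r1) : TT K) from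
      AlgEquiv.symm_apply_apply ψ _] at h4
  have hr1unit : IsUnit r1 := Polynomial.isUnit_C.mp (Polynomial.isUnit_C.mp hunit)
  obtain ⟨lam, hlamU, hlamC⟩ := Polynomial.isUnit_iff.mp hr1unit
  have hlam0 : lam ≠ 0 := hlamU.ne_zero
  have hp2 : p = Polynomial.aeval u A1x * t + ev2 K u v A0 := by
    have h1 : p = ψ (C A1 * Polynomial.X + C A0) := by rw [← hPTdec, hψPT]
    rw [map_add, map_mul, hψz, hψC, hψC, ← hA1x, ev2_C] at h1
    exact h1
  set w : PolyR K := algebraMap K (PolyR K) lam⁻¹ * t with hwdef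
  have halglam : algebraMap K (PolyR K) lam * algebraMap K (PolyR K) lam⁻¹ = 1 := by
    rw [← map_mul, mul_inv_cancel₀ hlam0, map_one]
  have haev : Polynomial.aeval u c = algebraMap K (PolyR K) lam * Polynomial.aeval u A1x := by
    rw [hcfact, ← hlamC, map_mul, Polynomial.aeval_C]
  have hw1 : p + ev2 K u v (-A0) = Polynomial.aeval u c * w := by
    rw [hp2, ev2_neg, haev, hwdef]
    have h1 : algebraMap K (PolyR K) lam * Polynomial.aeval u A1x *
        (algebraMap K (PolyR K) lam⁻¹ * t) =
        algebraMap K (PolyR K) lam * algebraMap K (PolyR K) lam⁻¹ *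
        (Polynomial.aeval u A1x * t) := by ring
    rw [h1, halglam, one_mul]
    ring
  have hcs : Algebra.adjoin K {u, v, w} = ⊤ := by
    rw [eq_top_iff, ← hadj]
    apply Algebra.adjoin_le
    intro a ha
    rcases ha with h1 | h2 | h3
    · exact h1 ▸ Algebra.subset_adjoin (by simp)
    · exact h2 ▸ Algebra.subset_adjoin (by simp)
    · have ht : t = algebraMap K (PolyR K) lam * w := by
        rw [hwdef, ← mul_assoc, halglam, one_mul]
      rw [Set.mem_singleton_iff.mp h3, ht]
      exact Subalgebra.mul_mem _ (Subalgebra.algebraMap_mem _ _)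
        (Algebra.subset_adjoin (by simp))
  have hXw : X w = ev2 K u v (Polynomial.derivative (-A0)) := by
    apply mul_left_cancel₀ hauc
    have h1 := congrArg X hw1
    rw [map_add, hXp, zero_add, X_ev2 K X u v hXu, hXv, Derivation.leibniz,
      X_aeval K X u hXu c, smul_eq_mul, smul_eq_mul, mul_zero, add_zero] at h1
    rw [← h1]
    ring
  refine ⟨w, -A0, hw1, hcs, hXu, hXv, hXw, ?_⟩
  exact ⟨u, v, w, hcs,
    by rw [hXu]; exact zero_mem _,
    by rw [hXv, Algebra.adjoin_singleton_eq_range_aeval]; exact ⟨c, rfl⟩,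
    by rw [hXw]; exact ev2_mem K u v _⟩

end
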